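/- arXiv:2309.04517 — 2 statements merged into one kernel-verified Lean document; each statement's English description precedes it below -/
import Mathlib

section
/- If G is an Eulerian graph of order n that is not a cycle, then G has at least n+1 edges and M_2(G) ≥ 4n + 20. -/
open SimpleGraph Finset

/-- Wiener index: sum of distances over unordered pairs of vertices. -/
noncomputable def wienerIndex {n : ℕ} (G : SimpleGraph (Fin n)) : ℕ :=
  ∑ p ∈ Finset.univ.filter (fun p : Fin n × Fin n => p.1 < p.2), G.dist p.1 p.2

/-- Harary index: sum of reciprocal distances over unordered pairs of vertices. -/
noncomputable def hararyIndex {n : ℕ} (G : SimpleGraph (Fin n)) : ℝ :=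
  ∑ p ∈ Finset.univ.filter (fun p : Fin n × Fin n => p.1 < p.2), (1 : ℝ) / (G.dist p.1 p.2)

/-- A graph is Eulerian if it is connected and every vertex has even degree. -/
def IsEulerian {n : ℕ} (G : SimpleGraph (Fin n)) [DecidableRel G.Adj] : Prop :=
  G.Connected ∧ ∀ v, Even (G.degree v)

/-- A graph is 2-edge-connected if it is connected and remains connected
after the deletion of any single edge. -/
def TwoEdgeConnected {n : ℕ} (G : SimpleGraph (Fin n)) : Prop :=
  G.Connected ∧ ∀ e ∈ G.edgeSet, (G.deleteEdges {e}).Connected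

/-- A graph is 2-connected if it has at least 3 vertices and deleting any
single vertex leaves it connected (no cutvertex). -/
def TwoConnected {n : ℕ} (G : SimpleGraph (Fin n)) : Prop :=
  3 ≤ n ∧ G.Connected ∧
    ∀ v : Fin n, ((⊤ : G.Subgraph).deleteVerts {v}).coe.Connected

/-- Second Zagreb index: `∑_{uv ∈ E} deg(u) * deg(v)`. -/
def secondZagreb {n : ℕ} (G : SimpleGraph (Fin n)) [DecidableRel G.Adj] : ℕ :=
  ∑ e ∈ G.edgeFinset,
    Sym2.lift ⟨fun u v => G.degree u * G.degree v, fun u v => Nat.mul_comm _ _⟩ e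

namespace EulerianAux

variable {n : ℕ} (G : SimpleGraph (Fin n)) [DecidableRel G.Adj]

/-- The neighbour of `b` other than `a` (in a graph where `b` has degree 2). -/
def nxt (a b : Fin n) : Fin n :=
  if h : ((G.neighborFinset b).erase a).Nonempty then ((G.neighborFinset b).erase a).min' h
  else a

variable {G}

lemma nxt_spec (hdeg : ∀ v, G.degree v = 2) {a b : Fin n} (h : G.Adj a b) :
    (G.neighborFinset b).erase a = {nxt G a b} := by
  have hmem : a ∈ G.neighborFinset b := by
    rw [SimpleGraph.mem_neighborFinset]; exact h.symm
  have hcard : ((G.neighborFinset b).erase a).card = 1 := by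
    have h2 : (G.neighborFinset b).card = 2 := hdeg b
    rw [Finset.card_erase_of_mem hmem, h2]
  obtain ⟨c, hc⟩ := Finset.card_eq_one.mp hcard
  have hne : ((G.neighborFinset b).erase a).Nonempty := by
    rw [hc]; exact ⟨c, Finset.mem_singleton_self c⟩
  have hmin : nxt G a b ∈ (G.neighborFinset b).erase a := by
    rw [nxt, dif_pos hne]; exact Finset.min'_mem _ hne
  rw [hc] at hmin ⊢
  rw [Finset.mem_singleton.mp hmin]

lemma nxt_mem (hdeg : ∀ v, G.degree v = 2) {a b : Fin n} (h : G.Adj a b) :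
    nxt G a b ∈ (G.neighborFinset b).erase a := by
  rw [nxt_spec hdeg h]; exact Finset.mem_singleton_self _

lemma nxt_adj (hdeg : ∀ v, G.degree v = 2) {a b : Fin n} (h : G.Adj a b) :
    G.Adj b (nxt G a b) := by
  have := nxt_mem hdeg h
  rw [Finset.mem_erase, SimpleGraph.mem_neighborFinset] at this
  exact this.2

lemma nxt_ne (hdeg : ∀ v, G.degree v = 2) {a b : Fin n} (h : G.Adj a b) :
    nxt G a b ≠ a :=
  (Finset.mem_erase.mp (nxt_mem hdeg h)).1

lemma nxt_eq (hdeg : ∀ v, G.degree v = 2) {a b z : Fin n} (h : G.Adj a b)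
    (hz : G.Adj b z) (hza : z ≠ a) : z = nxt G a b := by
  have hmem : z ∈ (G.neighborFinset b).erase a :=
    Finset.mem_erase.mpr ⟨hza, (SimpleGraph.mem_neighborFinset _ _ _).mpr hz⟩
  rw [nxt_spec hdeg h] at hmem
  exact Finset.mem_singleton.mp hmem

lemma nxt_nxt (hdeg : ∀ v, G.degree v = 2) {a b : Fin n} (h : G.Adj a b) :
    nxt G (nxt G a b) b = a :=
  (nxt_eq hdeg (nxt_adj hdeg h).symm h.symm (nxt_ne hdeg h).symm).symm

variable (G) in
/-- One step along the walk: `(a, b) ↦ (b, other neighbour of b)`. -/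
def stp : Fin n × Fin n → Fin n × Fin n := fun s => (s.2, nxt G s.1 s.2)

lemma stp_adj (hdeg : ∀ v, G.degree v = 2) {s : Fin n × Fin n} (hs : G.Adj s.1 s.2) :
    G.Adj (stp G s).1 (stp G s).2 := nxt_adj hdeg hs

lemma stp_swap (hdeg : ∀ v, G.degree v = 2) {s : Fin n × Fin n} (hs : G.Adj s.1 s.2) :
    stp G (stp G s).swap = s.swap := by
  refine Prod.ext_iff.mpr ⟨rfl, ?_⟩
  exact nxt_nxt hdeg hs

lemma stp_cancel (hdeg : ∀ v, G.degree v = 2) {s t : Fin n × Fin n}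
    (hs : G.Adj s.1 s.2) (ht : G.Adj t.1 t.2) (h : stp G s = stp G t) : s = t := by
  have h1 := stp_swap hdeg hs
  rw [h, stp_swap hdeg ht] at h1
  have := congrArg Prod.swap h1
  simpa using this.symm

lemma iter_adj (hdeg : ∀ v, G.degree v = 2) {s : Fin n × Fin n} (hs : G.Adj s.1 s.2)
    (k : ℕ) : G.Adj ((stp G)^[k] s).1 ((stp G)^[k] s).2 := by
  induction k with
  | zero => exact hs
  | succ k ih => rw [Function.iterate_succ_apply']; exact stp_adj hdeg ih

lemma iter_cancel (hdeg : ∀ v, G.degree v = 2) {s t : Fin n × Fin n}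
    (hs : G.Adj s.1 s.2) (ht : G.Adj t.1 t.2) (k : ℕ)
    (h : (stp G)^[k] s = (stp G)^[k] t) : s = t := by
  induction k generalizing s t with
  | zero => exact h
  | succ k ih =>
    rw [Function.iterate_succ_apply, Function.iterate_succ_apply] at h
    exact stp_cancel hdeg hs ht (ih (stp_adj hdeg hs) (stp_adj hdeg ht) h)

lemma exists_period (hdeg : ∀ v, G.degree v = 2) {s : Fin n × Fin n} (hs : G.Adj s.1 s.2) :
    ∃ p, 0 < p ∧ (stp G)^[p] s = s := by
  have key : ∀ a b : ℕ, a < b → (stp G)^[a] s = (stp G)^[b] s →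
      ∃ p, 0 < p ∧ (stp G)^[p] s = s := by
    intro a b hab he
    have h1 : (stp G)^[a] ((stp G)^[b - a] s) = (stp G)^[a] s := by
      rw [← Function.iterate_add_apply, show a + (b - a) = b from by omega]
      exact he.symm
    exact ⟨b - a, by omega, iter_cancel hdeg (iter_adj hdeg hs _) hs a h1⟩
  obtain ⟨a, b, hab, he⟩ := Finite.exists_ne_map_eq_of_infinite (fun k : ℕ => (stp G)^[k] s)
  rcases hab.lt_or_gt with hlt | hlt
  · exact key a b hlt he
  · exact key b a hlt he.symm

lemma no_repeat (hdeg : ∀ v, G.degree v = 2) {s : Fin n × Fin n} (hs : G.Adj s.1 s.2)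
    {j : ℕ} (hj0 : 0 < j) (hjp : j < Function.minimalPeriod (stp G) s)
    (he : ((stp G)^[j] s).1 = s.1) : False := by
  by_cases hw : ((stp G)^[j] s).2 = s.2
  · have hper : Function.IsPeriodicPt (stp G) j s := Prod.ext_iff.mpr ⟨he, hw⟩
    exact absurd (Nat.le_of_dvd hj0 hper.minimalPeriod_dvd) (not_le.mpr hjp)
  · obtain ⟨j', rfl⟩ : ∃ j', j = j' + 1 := ⟨j - 1, by omega⟩
    have claim : ∀ k m, k + m = j' → (stp G)^[m] s = ((stp G)^[k] s).swap := by
      intro k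
      induction k with
      | zero =>
        intro m hm
        obtain rfl : m = j' := by omega
        have hstept : stp G ((stp G)^[m] s) = (stp G)^[m + 1] s :=
          (Function.iterate_succ_apply' _ _ _).symm
        have h1 : ((stp G)^[m] s).2 = s.1 := by
          have := congrArg Prod.fst hstept
          simpa [stp] using this.trans he
        have hadj_t : G.Adj ((stp G)^[m] s).1 ((stp G)^[m] s).2 := iter_adj hdeg hs m
        have h2 : ((stp G)^[m] s).1 = s.2 := by
          by_contra hne
          have hz : G.Adj ((stp G)^[m] s).2 s.2 := by rw [h1]; exact hs
          have h3 : s.2 = nxt G ((stp G)^[m] s).1 ((stp G)^[m] s).2 :=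
            nxt_eq hdeg hadj_t hz (fun hh => hne hh.symm)
          exact hw (by rw [← hstept]; exact h3.symm)
        show (stp G)^[m] s = ((stp G)^[0] s).swap
        exact Prod.ext_iff.mpr ⟨by simpa using h2, by simpa using h1⟩
      | succ k ih =>
        intro m hm
        have ihm := ih (m + 1) (by omega)
        have hx : G.Adj ((stp G)^[k] s).1 ((stp G)^[k] s).2 := iter_adj hdeg hs k
        have e1 : stp G ((stp G)^[k + 1] s).swap = ((stp G)^[k] s).swap := by
          rw [Function.iterate_succ_apply']
          exact stp_swap hdeg hx
        have e2 : stp G ((stp G)^[m] s) = ((stp G)^[k] s).swap :=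
          (Function.iterate_succ_apply' (stp G) m s).symm.trans ihm
        have ha1 : G.Adj ((stp G)^[k + 1] s).swap.1 ((stp G)^[k + 1] s).swap.2 := by
          simpa using (iter_adj hdeg hs (k + 1)).symm
        exact stp_cancel hdeg (iter_adj hdeg hs m) ha1 (e2.trans e1.symm)
    rcases Nat.even_or_odd j' with ⟨k, hk⟩ | ⟨k, hk⟩
    · have hc := claim k k (by omega)
      have hadj := iter_adj hdeg hs k
      have h12 : ((stp G)^[k] s).1 = ((stp G)^[k] s).2 := by
        conv_lhs => rw [hc]
        simp
      exact G.loopless.irrefl _ (h12 ▸ hadj)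
    · have hc := claim k (k + 1) (by omega)
      have hadj := iter_adj hdeg hs k
      rw [Function.iterate_succ_apply'] at hc
      have h2 := congrArg Prod.snd hc
      simp only [stp, Prod.snd_swap] at h2
      exact nxt_ne hdeg hadj h2

lemma fst_ne (hdeg : ∀ v, G.degree v = 2) {s : Fin n × Fin n} (hs : G.Adj s.1 s.2)
    (hp0 : 0 < Function.minimalPeriod (stp G) s) {i j : ℕ} (hij : i < j)
    (hjp : j < Function.minimalPeriod (stp G) s) :
    ((stp G)^[i] s).1 ≠ ((stp G)^[j] s).1 := by
  intro he
  have hmem : s ∈ Function.periodicPts (stp G) :=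
    Function.minimalPeriod_pos_iff_mem_periodicPts.mp hp0
  have hper := Function.minimalPeriod_apply_iterate hmem i
  refine no_repeat hdeg (iter_adj hdeg hs i) (j := j - i) (by omega) (by rw [hper]; omega) ?_
  rw [← Function.iterate_add_apply, show j - i + i = j from by omega]
  exact he.symm

lemma two_regular_iso (hdeg : ∀ v, G.degree v = 2) (hconn : G.Connected) :
    Nonempty (G ≃g cycleGraph n) := by
  haveI : Nonempty (Fin n) := hconn.nonempty
  obtain ⟨u⟩ := ‹Nonempty (Fin n)›
  have hn3 : 3 ≤ n := by
    have := G.degree_lt_card_verts u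
    rw [hdeg u, Fintype.card_fin] at this
    omega
  haveI : NeZero n := ⟨by omega⟩
  obtain ⟨v, huv⟩ := (G.degree_pos_iff_exists_adj u).mp (by rw [hdeg u]; omega)
  set s : Fin n × Fin n := (u, v) with hsdef
  have hs : G.Adj s.1 s.2 := huv
  obtain ⟨q, hq0, hqper⟩ := exists_period hdeg hs
  set p := Function.minimalPeriod (stp G) s with hpdef
  have hp0 : 0 < p := Function.IsPeriodicPt.minimalPeriod_pos hq0 hqper
  have hpp : (stp G)^[p] s = s := Function.iterate_minimalPeriod
  set f : ℕ → Fin n := fun k => ((stp G)^[k] s).1 with hfdef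
  have hfper : Function.Periodic f p := by
    intro k
    simp only [hfdef]
    rw [Function.iterate_add_apply, hpp]
  have hfmod : ∀ k, f (k % p) = f k := fun k => hfper.map_mod_nat k
  have hsnd : ∀ k, ((stp G)^[k] s).2 = f (k + 1) := by
    intro k
    simp only [hfdef]
    rw [Function.iterate_succ_apply']
    rfl
  have hadjf : ∀ k, G.Adj (f k) (f (k + 1)) := by
    intro k
    have := iter_adj hdeg hs k
    rwa [hsnd k] at this
  have hnbr : ∀ k, 0 < k → ∀ z, G.Adj (f k) z → z = f (k - 1) ∨ z = f (k + 1) := by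
    intro k hk z hz
    obtain ⟨k', rfl⟩ : ∃ k', k = k' + 1 := ⟨k - 1, by omega⟩
    by_cases hzk : z = f k'
    · left; simpa using hzk
    · right
      have hnx : nxt G ((stp G)^[k'] s).1 ((stp G)^[k'] s).2 = f (k' + 1 + 1) := by
        have e := congrArg Prod.snd (Function.iterate_succ_apply' (stp G) k' s)
        rw [hsnd (k' + 1)] at e
        exact e.symm
      have hz' : G.Adj ((stp G)^[k'] s).2 z := by rw [hsnd k']; exact hz
      have hzne : z ≠ ((stp G)^[k'] s).1 := hzk
      have := nxt_eq hdeg (iter_adj hdeg hs k') hz' hzne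
      rw [hnx] at this
      simpa using this
  have hsurj : ∀ z : Fin n, ∃ k, z = f k := by
    have key : ∀ (a b : Fin n), G.Walk a b → (∃ k, a = f k) → (∃ k, b = f k) := by
      intro a b w
      induction w with
      | nil => exact id
      | @cons a c b hac q ih =>
        rintro ⟨k, rfl⟩
        apply ih
        have hadj : G.Adj (f (k + p)) c := by rw [hfper k]; exact hac
        rcases hnbr (k + p) (by omega) c hadj with h1 | h1
        exacts [⟨k + p - 1, h1⟩, ⟨k + p + 1, h1⟩]
    intro z
    obtain ⟨w⟩ := hconn.preconnected u z
    exact key u z w ⟨0, rfl⟩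
  have hinjOn : ∀ i j, i < p → j < p → f i = f j → i = j := by
    intro i j hi hj hij
    rcases lt_trichotomy i j with h | h | h
    · exact absurd hij (fst_ne hdeg hs hp0 h hj)
    · exact h
    · exact absurd hij.symm (fst_ne hdeg hs hp0 h hi)
  have hpn : p = n := by
    have himg : (Finset.range p).image f = Finset.univ := by
      apply Finset.eq_univ_of_forall
      intro z
      obtain ⟨k, rfl⟩ := hsurj z
      rw [← hfmod k]
      exact Finset.mem_image.mpr ⟨k % p, Finset.mem_range.mpr (Nat.mod_lt _ hp0), rfl⟩
    have hcard := congrArg Finset.card himg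
    rwa [Finset.card_image_of_injOn
        (fun i hi j hj hij => hinjOn i j (Finset.mem_range.mp hi) (Finset.mem_range.mp hj) hij),
      Finset.card_range, Finset.card_univ, Fintype.card_fin] at hcard
  set F : Fin n → Fin n := fun i => f i.val with hFdef
  have hFinj : Function.Injective F := by
    intro i j hij
    refine Fin.ext (hinjOn _ _ ?_ ?_ hij)
    · have := i.isLt; omega
    · have := j.isLt; omega
  have hFbij := Finite.injective_iff_bijective.mp hFinj
  have hfmodn : ∀ k, f (k % n) = f k := by
    intro k
    have := hfmod k
    rwa [hpn] at this
  have hfpern : ∀ k, f (k + n) = f k := by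
    intro k
    have := hfper k
    rwa [hpn] at this
  have hv1 : (1 : Fin n).val = 1 := by
    rw [Fin.val_one']
    exact Nat.mod_eq_of_lt (by omega)
  have hFsucc : ∀ i : Fin n, F (i + 1) = f (i.val + 1) := by
    intro i
    show f ((i + 1 : Fin n).val) = f (i.val + 1)
    rw [← hfmodn (i.val + 1)]
    congr 1
    rw [Fin.add_def, hv1]
  have hFpred : ∀ i : Fin n, F (i - 1) = f (i.val + (n - 1)) := by
    intro i
    show f ((i - 1 : Fin n).val) = f (i.val + (n - 1))
    rw [← hfmodn (i.val + (n - 1))]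
    congr 1
    rw [Fin.sub_def, hv1]
    simp [Nat.add_comm]
  have hFadj : ∀ (i : Fin n) z, G.Adj (F i) z → z = F (i - 1) ∨ z = F (i + 1) := by
    intro i z hz
    have h1 : f (i.val + n) = F i := hfpern i.val
    have hadj' : G.Adj (f (i.val + n)) z := by rw [h1]; exact hz
    rcases hnbr (i.val + n) (by omega) z hadj' with h2 | h2
    · left
      rw [hFpred i, h2]
      congr 1
      omega
    · right
      rw [hFsucc i, h2, show i.val + n + 1 = i.val + 1 + n from by omega, hfpern]
  refine ⟨(RelIso.mk (Equiv.ofBijective F hFbij) ?_).symm⟩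
  intro a b
  show G.Adj (F a) (F b) ↔ (cycleGraph n).Adj a b
  rw [SimpleGraph.cycleGraph_adj']
  constructor
  · intro hadj
    rcases hFadj a (F b) hadj with h1 | h1
    · have hb : b = a - 1 := hFinj h1
      subst hb
      left
      rw [sub_sub_cancel, hv1]
    · have hb : b = a + 1 := hFinj h1
      subst hb
      right
      rw [add_sub_cancel_left, hv1]
  · intro hadj
    rcases hadj with h1 | h1
    · have hab : a - b = 1 := Fin.ext (by rw [hv1]; exact h1)
      have hab' : a = b + 1 := by
        have := sub_eq_iff_eq_add.mp hab
        rwa [add_comm] at this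
      subst hab'
      have := hadjf b.val
      rw [← hFsucc b] at this
      exact this.symm
    · have hab : b - a = 1 := Fin.ext (by rw [hv1]; exact h1)
      have hab' : b = a + 1 := by
        have := sub_eq_iff_eq_add.mp hab
        rwa [add_comm] at this
      subst hab'
      have := hadjf a.val
      rwa [← hFsucc a] at this

lemma exists_degree_four (h : IsEulerian G) (hnc : ¬ Nonempty (G ≃g cycleGraph n)) :
    ∃ w, 4 ≤ G.degree w := by
  obtain ⟨hconn, heven⟩ := h
  by_contra hno
  push_neg at hno
  haveI : Nonempty (Fin n) := hconn.nonempty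
  have hn1 : 1 ≤ n := by
    have := Fintype.card_pos (α := Fin n)
    rwa [Fintype.card_fin] at this
  rcases eq_or_lt_of_le hn1 with h1 | h2
  · apply hnc
    subst h1
    refine ⟨⟨Equiv.refl _, fun {a b} => ?_⟩⟩
    have hab : a = b := Subsingleton.elim a b
    subst hab
    constructor
    · intro hh; exact absurd rfl hh.ne
    · intro hh; exact absurd rfl hh.ne
  · have hdeg : ∀ v, G.degree v = 2 := by
      intro v
      have hpos : 0 < G.degree v := by
        rw [G.degree_pos_iff_exists_adj]
        obtain ⟨w, hw⟩ := Fintype.exists_ne_of_one_lt_card (by rw [Fintype.card_fin]; omega) v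
        obtain ⟨walk⟩ := hconn.preconnected v w
        cases walk with
        | nil => exact absurd rfl hw
        | cons hadj q => exact ⟨_, hadj⟩
      obtain ⟨c, hc⟩ := heven v
      have := hno v
      omega
    exact hnc (two_regular_iso hdeg hconn)

end EulerianAux

/-- If `G` is an Eulerian graph of order `n` that is not a cycle, then `G`
has at least `n + 1` edges and `M₂(G) ≥ 4n + 20`. -/
theorem eulerian_not_cycle {n : ℕ} (G : SimpleGraph (Fin n))
    [DecidableRel G.Adj] (h : IsEulerian G)
    (hnc : ¬ Nonempty (G ≃g cycleGraph n)) :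
    n + 1 ≤ G.edgeFinset.card ∧ 4 * n + 20 ≤ secondZagreb G := by
  classical
  obtain ⟨w, hw⟩ := EulerianAux.exists_degree_four h hnc
  obtain ⟨hconn, heven⟩ := h
  haveI : Nonempty (Fin n) := hconn.nonempty
  have hn : 5 ≤ n := by
    have := G.degree_lt_card_verts w
    rw [Fintype.card_fin] at this
    omega
  have hd2 : ∀ v, 2 ≤ G.degree v := by
    intro v
    have hpos : 0 < G.degree v := by
      rw [G.degree_pos_iff_exists_adj]
      obtain ⟨x, hx⟩ := Fintype.exists_ne_of_one_lt_card (by rw [Fintype.card_fin]; omega) v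
      obtain ⟨walk⟩ := hconn.preconnected v x
      cases walk with
      | nil => exact absurd rfl hx
      | cons hadj q => exact ⟨_, hadj⟩
    obtain ⟨c, hc⟩ := heven v
    omega
  have hsum : 2 * n + 2 ≤ ∑ v, G.degree v := by
    have step1 : ∀ v ∈ Finset.univ, (if v = w then 4 else 2) ≤ G.degree v := by
      intro v _
      split
      · next hvw => rw [hvw]; exact hw
      · exact hd2 v
    have hcalc : ∑ v : Fin n, (if v = w then 4 else 2) = 2 * n + 2 := by
      have : ∀ v : Fin n, (if v = w then 4 else 2) = (if v = w then 2 else 0) + 2 := by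
        intro v; split <;> rfl
      rw [Finset.sum_congr rfl fun v _ => this v, Finset.sum_add_distrib,
        Finset.sum_ite_eq' Finset.univ w (fun _ => 2), Finset.sum_const, Finset.card_univ,
        Fintype.card_fin, if_pos (Finset.mem_univ w), smul_eq_mul]
      ring
    calc 2 * n + 2 = ∑ v : Fin n, (if v = w then 4 else 2) := hcalc.symm
      _ ≤ ∑ v, G.degree v := Finset.sum_le_sum step1
  have htwice := G.sum_degrees_eq_twice_card_edges
  have hedge : n + 1 ≤ G.edgeFinset.card := by omega
  refine ⟨hedge, ?_⟩
  have hterm : ∀ e ∈ G.edgeFinset, (if w ∈ e then 8 else 4) ≤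
      Sym2.lift ⟨fun u v => G.degree u * G.degree v, fun u v => Nat.mul_comm _ _⟩ e := by
    intro e
    induction e using Sym2.ind with
    | _ x y =>
      intro he
      have hadj : G.Adj x y := by rwa [SimpleGraph.mem_edgeFinset, SimpleGraph.mem_edgeSet] at he
      have hx2 := hd2 x
      have hy2 := hd2 y
      rw [Sym2.lift_mk]
      by_cases hwmem : w ∈ s(x, y)
      · rw [if_pos hwmem]
        rcases Sym2.mem_iff.mp hwmem with rfl | rfl
        · calc (8 : ℕ) = 4 * 2 := rfl
            _ ≤ _ := Nat.mul_le_mul hw hy2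
        · calc (8 : ℕ) = 2 * 4 := rfl
            _ ≤ _ := Nat.mul_le_mul hx2 hw
      · rw [if_neg hwmem]
        calc (4 : ℕ) = 2 * 2 := rfl
          _ ≤ _ := Nat.mul_le_mul hx2 hy2
  have hsum2 : ∑ e ∈ G.edgeFinset, (if w ∈ e then 8 else 4) ≤ secondZagreb G :=
    Finset.sum_le_sum hterm
  have hfilter : (G.edgeFinset.filter (fun e => w ∈ e)).card = G.degree w := by
    rw [← SimpleGraph.incidenceFinset_eq_filter, SimpleGraph.card_incidenceFinset_eq_degree]
  have hc12 := Finset.card_filter_add_card_filter_not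
    (s := G.edgeFinset) (p := fun e => w ∈ e)
  rw [Finset.sum_ite, Finset.sum_const, Finset.sum_const, smul_eq_mul, smul_eq_mul] at hsum2
  omega
end

section
/- For every 2-connected graph G on n vertices, the Harary index H(G) is at least H(C_n), with equality if and only if G ≅ C_n. -/
open SimpleGraph Finset

/-- ordered-pair version -/
noncomputable def Sord {n : ℕ} (G : SimpleGraph (Fin n)) : ℝ :=
  ∑ u : Fin n, ∑ v : Fin n, (1:ℝ)/(G.dist u v)

lemma harary_eq_half {n : ℕ} (G : SimpleGraph (Fin n)) : hararyIndex G = Sord G / 2 := by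
  have hdiag : ∀ p : Fin n × Fin n, p.1 = p.2 → (1:ℝ)/(G.dist p.1 p.2) = 0 := by
    intro p hp; rw [hp]; simp
  have hswap : ∑ p ∈ Finset.univ.filter (fun p : Fin n × Fin n => p.2 < p.1),
      (1 : ℝ) / (G.dist p.1 p.2)
      = ∑ p ∈ Finset.univ.filter (fun p : Fin n × Fin n => p.1 < p.2),
      (1 : ℝ) / (G.dist p.1 p.2) := by
    refine Finset.sum_nbij' (fun p => Prod.swap p) (fun p => Prod.swap p) ?_ ?_ ?_ ?_ ?_ <;>
      simp [SimpleGraph.dist_comm]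
  have : Sord G = ∑ p : Fin n × Fin n, (1:ℝ)/(G.dist p.1 p.2) := by
    rw [Fintype.sum_prod_type]; rfl
  rw [this]
  rw [← Finset.sum_filter_add_sum_filter_not (Finset.univ) (fun p : Fin n × Fin n => p.1 < p.2)]
  have h2 : ∑ p ∈ Finset.univ.filter (fun p : Fin n × Fin n => ¬ p.1 < p.2),
      (1 : ℝ) / (G.dist p.1 p.2)
      = ∑ p ∈ Finset.univ.filter (fun p : Fin n × Fin n => p.2 < p.1),
      (1 : ℝ) / (G.dist p.1 p.2) := by
    rw [← Finset.sum_filter_add_sum_filter_not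
      (Finset.univ.filter (fun p : Fin n × Fin n => ¬ p.1 < p.2))
      (fun p : Fin n × Fin n => p.2 < p.1)]
    have hz : ∑ p ∈ (Finset.univ.filter (fun p : Fin n × Fin n => ¬ p.1 < p.2)).filter
        (fun p : Fin n × Fin n => ¬ p.2 < p.1), (1 : ℝ) / (G.dist p.1 p.2) = 0 := by
      apply Finset.sum_eq_zero
      intro p hp
      simp only [Finset.mem_filter] at hp
      exact hdiag p (le_antisymm (not_lt.1 hp.2) (not_lt.1 hp.1.2))
    rw [hz, add_zero, Finset.filter_filter]
    congr 1
    apply Finset.filter_congr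
    intro p _
    constructor
    · rintro ⟨-, h⟩; exact h
    · intro h; exact ⟨not_lt.2 h.le, h⟩
  rw [h2, hswap]
  unfold hararyIndex
  ring

variable {V W : Type*} {G : SimpleGraph V} {H : SimpleGraph W}

lemma iso_dist_le (e : G ≃g H) (u v : V) :
    H.dist (e u) (e v) ≤ G.dist u v := by
  by_cases hr : G.Reachable u v
  · obtain ⟨p, hp⟩ := hr.exists_walk_length_eq_dist
    calc H.dist (e u) (e v) ≤ (p.map e.toHom).length := dist_le _
    _ = G.dist u v := by rw [Walk.length_map, hp]
  · rw [dist_eq_zero_of_not_reachable hr, dist_eq_zero_of_not_reachable]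
    intro ⟨q⟩
    exact hr ⟨(q.map e.symm.toHom).copy (by simp) (by simp)⟩

lemma iso_dist (e : G ≃g H) (u v : V) :
    H.dist (e u) (e v) = G.dist u v := by
  refine le_antisymm (iso_dist_le e u v) ?_
  have := iso_dist_le e.symm (e u) (e v)
  simpa using this

lemma tele (d : ℕ) (hd : 1 ≤ d) :
    ∑ k ∈ Finset.Icc 2 d, ((1:ℝ)/((k:ℝ)-1) - 1/k) = 1 - 1/d := by
  induction d, hd using Nat.le_induction with
  | base => simp
  | succ m hm ih =>
    rw [Finset.sum_Icc_succ_top (by omega), ih]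
    have h1 : ((m:ℝ)) ≠ 0 := by positivity
    have h2 : ((m:ℝ)+1) ≠ 0 := by positivity
    push_cast
    field_simp
    ring_nf
    field_simp
    ring

lemma inv_dist_eq {N d : ℕ} (hd : 1 ≤ d) (hdn : d ≤ N) :
    (1:ℝ)/d = 1 - ∑ k ∈ Finset.Icc 2 N,
      (if k ≤ d then ((1:ℝ)/((k:ℝ)-1) - 1/k) else 0) := by
  have : ∑ k ∈ Finset.Icc 2 N, (if k ≤ d then ((1:ℝ)/((k:ℝ)-1) - 1/k) else 0)
      = ∑ k ∈ Finset.Icc 2 d, ((1:ℝ)/((k:ℝ)-1) - 1/k) := by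
    rw [← Finset.sum_filter]
    congr 1
    ext k
    simp only [Finset.mem_filter, Finset.mem_Icc]
    omega
  rw [this, tele d hd]
  ring

noncomputable def cnt {n : ℕ} (G : SimpleGraph (Fin n)) (v : Fin n) (k : ℕ) : ℕ :=
  (Finset.univ.filter (fun u => k ≤ G.dist v u)).card

noncomputable def lvl {n : ℕ} (G : SimpleGraph (Fin n)) (v : Fin n) (j : ℕ) : ℕ :=
  (Finset.univ.filter (fun u => G.dist v u = j)).card

noncomputable def tkk {n : ℕ} (G : SimpleGraph (Fin n)) (k : ℕ) : ℕ := ∑ v, cnt G v k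

/-- partition of vertices by distance -/
lemma part_lemma {n : ℕ} (G : SimpleGraph (Fin n)) (v : Fin n) (k : ℕ) :
    ∑ j ∈ Finset.range k, lvl G v j + cnt G v k = n := by
  have h := Finset.card_eq_sum_card_fiberwise
    (f := fun u : Fin n => min (G.dist v u) k) (s := Finset.univ) (t := Finset.range (k+1))
    (by intro x _; simp only [Finset.coe_range, Set.mem_Iio, Finset.mem_coe, Finset.mem_range]; omega)
  rw [Finset.card_univ, Fintype.card_fin] at h
  rw [Finset.sum_range_succ] at h
  have e1 : ∑ j ∈ Finset.range k, lvl G v j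
      = ∑ j ∈ Finset.range k,
        (Finset.univ.filter (fun u : Fin n => min (G.dist v u) k = j)).card := by
    apply Finset.sum_congr rfl
    intro j hj
    simp only [Finset.mem_range] at hj
    unfold lvl
    congr 1
    apply Finset.filter_congr
    intro u _
    omega
  have e2 : cnt G v k
      = (Finset.univ.filter (fun u : Fin n => min (G.dist v u) k = k)).card := by
    unfold cnt
    congr 1
    apply Finset.filter_congr
    intro u _
    omega
  beta_reduce at h
  rw [e1, e2]
  omega

lemma row_lemma {n : ℕ} {G : SimpleGraph (Fin n)} (hconn : G.Connected) (u : Fin n) :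
    ∑ v, (1:ℝ)/(G.dist u v)
      = ((n:ℝ) - 1) - ∑ k ∈ Finset.Icc 2 n, ((1:ℝ)/((k:ℝ)-1) - 1/k) * (cnt G u k) := by
  have hn1 : 1 ≤ n := u.pos
  have hsplit : ∑ v, (1:ℝ)/(G.dist u v)
      = ∑ v ∈ Finset.univ.erase u, (1:ℝ)/(G.dist u v) := by
    refine (Finset.sum_erase _ ?_).symm
    simp
  rw [hsplit]
  have hterm : ∀ v ∈ Finset.univ.erase u, (1:ℝ)/(G.dist u v)
      = 1 - ∑ k ∈ Finset.Icc 2 n,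
        (if k ≤ G.dist u v then ((1:ℝ)/((k:ℝ)-1) - 1/k) else 0) := by
    intro v hv
    have hne : u ≠ v := fun he => (Finset.mem_erase.1 hv).1 he.symm
    have hd1 : 1 ≤ G.dist u v := hconn.pos_dist_of_ne hne
    have hdn : G.dist u v ≤ n := by
      obtain ⟨p, hp, hl⟩ := hconn.exists_path_of_dist u v
      have := hp.length_lt
      rw [Fintype.card_fin] at this
      omega
    exact inv_dist_eq hd1 hdn
  rw [Finset.sum_congr rfl hterm, Finset.sum_sub_distrib]
  have hcard : ((Finset.univ.erase u).card : ℝ) = (n:ℝ) - 1 := by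
    rw [Finset.card_erase_of_mem (Finset.mem_univ u), Finset.card_univ, Fintype.card_fin]
    push_cast [hn1]
    ring
  rw [Finset.sum_const, nsmul_eq_mul, mul_one, hcard]
  congr 1
  rw [Finset.sum_comm]
  apply Finset.sum_congr rfl
  intro k hk
  have hk2 : 2 ≤ k := (Finset.mem_Icc.1 hk).1
  have hzero : (if k ≤ G.dist u u then ((1:ℝ)/((k:ℝ)-1) - 1/k) else 0) = 0 := by
    rw [if_neg]
    rw [SimpleGraph.dist_self]
    omega
  rw [Finset.sum_erase (f := fun v : Fin n => if k ≤ G.dist u v then ((1:ℝ)/((k:ℝ)-1) - 1/k) else 0) Finset.univ hzero]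
  rw [Finset.sum_ite, Finset.sum_const_zero, add_zero, Finset.sum_const, nsmul_eq_mul]
  rw [mul_comm]
  rfl

lemma Sord_formula {n : ℕ} {G : SimpleGraph (Fin n)} (hconn : G.Connected) :
    Sord G = (n:ℝ) * ((n:ℝ) - 1)
      - ∑ k ∈ Finset.Icc 2 n, ((1:ℝ)/((k:ℝ)-1) - 1/k) * (tkk G k) := by
  unfold Sord
  rw [Finset.sum_congr rfl (fun u _ => row_lemma hconn u)]
  rw [Finset.sum_sub_distrib, Finset.sum_const, Finset.card_univ, Fintype.card_fin,
    nsmul_eq_mul]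
  congr 1
  rw [Finset.sum_comm]
  apply Finset.sum_congr rfl
  intro k _
  rw [← Finset.mul_sum]
  unfold tkk
  push_cast
  ring

section Counting
variable {V : Type*} {G : SimpleGraph V}

/-- a vertex at distance `j+1` has a neighbor at distance `j`. -/
lemma pred_exists {v u : V} {j : ℕ} (hd : G.dist v u = j + 1) :
    ∃ w, G.Adj w u ∧ G.dist v w = j := by
  have hr : G.Reachable v u := by
    by_contra hr
    rw [SimpleGraph.dist_eq_zero_of_not_reachable hr] at hd
    omega
  obtain ⟨p, hp⟩ := hr.exists_walk_length_eq_dist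
  rw [hd] at hp
  cases hpr : p.reverse with
  | nil =>
    have := congrArg SimpleGraph.Walk.length hpr
    rw [SimpleGraph.Walk.length_reverse, hp] at this
    simp at this
  | @cons _ w _ ha q =>
    refine ⟨w, ha.symm, ?_⟩
    have hq : q.length = j := by
      have := congrArg SimpleGraph.Walk.length hpr
      rw [SimpleGraph.Walk.length_reverse, hp] at this
      simpa using this.symm
    have h1 : G.dist v w ≤ j := by
      have := SimpleGraph.dist_le q.reverse
      rwa [SimpleGraph.Walk.length_reverse, hq] at this
    have h2 : j ≤ G.dist v w := by
      by_contra hlt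
      push_neg at hlt
      have hrvw : G.Reachable v w := ⟨q.reverse⟩
      obtain ⟨r, hr'⟩ := hrvw.exists_walk_length_eq_dist
      have := SimpleGraph.dist_le (r.concat ha.symm)
      rw [SimpleGraph.Walk.length_concat, hr', hd] at this
      omega
    omega

lemma exists_dist_eq' : ∀ (d : ℕ) (v u : V), G.dist v u = d →
    ∀ j ≤ d, ∃ w, G.dist v w = j := by
  intro d
  induction d with
  | zero =>
    intro v u _ j hj
    interval_cases j
    exact ⟨v, SimpleGraph.dist_self⟩
  | succ m ih =>
    intro v u hd j hj
    rcases eq_or_lt_of_le hj with h | h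
    · exact ⟨u, by rw [hd, h]⟩
    · obtain ⟨w, -, hw⟩ := pred_exists hd
      exact ih v w hw j (by omega)

lemma exists_dist_eq_at {v u : V} {j : ℕ} (hj : j ≤ G.dist v u) :
    ∃ w, G.dist v w = j :=
  exists_dist_eq' (G.dist v u) v u rfl j hj

/-- discrete intermediate value along a walk -/
lemma walk_ivt (hconn : G.Connected) (v : V) (j : ℕ) :
    ∀ {a b : V} (p : G.Walk a b), G.dist v a ≤ j → j < G.dist v b →
      ∃ x ∈ p.support, G.dist v x = j := by
  intro a b p
  induction p with
  | nil => intro h1 h2; omega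
  | @cons a c b h q ih =>
    intro h1 h2
    rcases eq_or_lt_of_le h1 with he | hlt
    · exact ⟨a, SimpleGraph.Walk.start_mem_support _, he⟩
    · have hac : G.dist a c ≤ 1 := by
        have := SimpleGraph.dist_le (SimpleGraph.Walk.cons h SimpleGraph.Walk.nil)
        simpa using this
      have hvc : G.dist v c ≤ j := by
        have := hconn.dist_triangle (u := v) (v := a) (w := c)
        omega
      obtain ⟨x, hx, hxd⟩ := ih hvc h2
      exact ⟨x, by simp [hx], hxd⟩

end Counting


/-- In a 2-connected graph, each intermediate distance level from `v` has ≥ 2 vertices. -/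
lemma lvl_two_le {n : ℕ} {G : SimpleGraph (Fin n)} (h2c : TwoConnected G)
    {v u : Fin n} {j : ℕ} (hj : 1 ≤ j) (hu : j < G.dist v u) :
    2 ≤ lvl G v j := by
  obtain ⟨hn3, hconn, hdel⟩ := h2c
  obtain ⟨w, hw⟩ := exists_dist_eq_at (G := G) (v := v) (u := u) (j := j) (le_of_lt hu)
  by_contra hlt
  push_neg at hlt
  have hmem : w ∈ Finset.univ.filter (fun x => G.dist v x = j) := by
    simp [hw]
  have huniq : ∀ x ∈ Finset.univ.filter (fun x => G.dist v x = j), x = w := by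
    intro x hx
    by_contra hne
    have : 2 ≤ (Finset.univ.filter (fun x => G.dist v x = j)).card :=
      Finset.one_lt_card.2 ⟨x, hx, w, hmem, hne⟩
    unfold lvl at hlt
    omega
  -- v and u are in the deleted graph
  have hvw : v ≠ w := by
    intro he
    rw [← he, SimpleGraph.dist_self] at hw
    omega
  have huw : u ≠ w := by
    intro he
    rw [← he] at hw
    omega
  have hvmem : v ∈ ((⊤ : G.Subgraph).deleteVerts {w}).verts := by
    simp [SimpleGraph.Subgraph.deleteVerts_verts, hvw]
  have humem : u ∈ ((⊤ : G.Subgraph).deleteVerts {w}).verts := by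
    simp [SimpleGraph.Subgraph.deleteVerts_verts, huw]
  obtain ⟨W⟩ := (hdel w) ⟨v, hvmem⟩ ⟨u, humem⟩
  have hend1 : ((⊤ : G.Subgraph).deleteVerts {w}).hom ⟨v, hvmem⟩ = v := rfl
  have hend2 : ((⊤ : G.Subgraph).deleteVerts {w}).hom ⟨u, humem⟩ = u := rfl
  set W' := (W.map ((⊤ : G.Subgraph).deleteVerts {w}).hom).copy hend1 hend2 with hW'
  obtain ⟨x, hx, hxd⟩ := walk_ivt hconn v j W' (by rw [SimpleGraph.dist_self]; omega) hu
  have hxw : x = w := huniq x (by simp [hxd])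
  rw [hW', SimpleGraph.Walk.support_copy, SimpleGraph.Walk.support_map, List.mem_map] at hx
  obtain ⟨y, -, hy⟩ := hx
  have hy2 : (y : Fin n) ∈ ((⊤ : G.Subgraph).verts : Set (Fin n)) \ {w} := by
    rw [← SimpleGraph.Subgraph.deleteVerts_verts]
    exact y.2
  rw [← hy] at hxw
  exact hy2.2 (by rw [Set.mem_singleton_iff]; exact hxw)

lemma lvl_zero {n : ℕ} {G : SimpleGraph (Fin n)} (hconn : G.Connected) (v : Fin n) :
    lvl G v 0 = 1 := by
  unfold lvl
  have : Finset.univ.filter (fun u => G.dist v u = 0) = {v} := by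
    ext u
    simp only [Finset.mem_filter, Finset.mem_univ, true_and, Finset.mem_singleton]
    rw [hconn.dist_eq_zero_iff]
    exact comm
  rw [this, Finset.card_singleton]

lemma lvl_one {n : ℕ} {G : SimpleGraph (Fin n)} [DecidableRel G.Adj] (v : Fin n) :
    lvl G v 1 = G.degree v := by
  unfold lvl
  rw [← SimpleGraph.card_neighborFinset_eq_degree]
  apply congrArg Finset.card
  ext u
  simp [SimpleGraph.dist_eq_one_iff_adj]

lemma cnt_one {n : ℕ} {G : SimpleGraph (Fin n)} (hconn : G.Connected) (v : Fin n) :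
    cnt G v 1 = n - 1 := by
  have h := part_lemma G v 1
  rw [Finset.sum_range_one, lvl_zero hconn] at h
  omega

lemma cnt_one_split {n : ℕ} (G : SimpleGraph (Fin n)) (v : Fin n) :
    cnt G v 1 = lvl G v 1 + cnt G v 2 := by
  have h1 := part_lemma G v 1
  have h2 := part_lemma G v 2
  rw [Finset.sum_range_one] at h1
  rw [Finset.sum_range_succ, Finset.sum_range_one] at h2
  omega

/-- min "degree" 2 for 2-connected graphs, as a level statement. -/
lemma lvl_one_ge_two {n : ℕ} {G : SimpleGraph (Fin n)} (h2c : TwoConnected G) (v : Fin n) :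
    2 ≤ lvl G v 1 := by
  by_cases hex : ∃ u, 2 ≤ G.dist v u
  · obtain ⟨u, hu⟩ := hex
    exact lvl_two_le h2c (u := u) le_rfl (by omega)
  · push_neg at hex
    have : Finset.univ.filter (fun u => G.dist v u = 1) = Finset.univ.erase v := by
      ext u
      simp only [Finset.mem_filter, Finset.mem_univ, true_and, Finset.mem_erase, and_true]
      constructor
      · intro h he
        rw [he, SimpleGraph.dist_self] at h
        omega
      · intro h
        have h1 := h2c.2.1.pos_dist_of_ne (Ne.symm h)
        have h2 := hex u
        omega
    unfold lvl
    rw [this, Finset.card_erase_of_mem (Finset.mem_univ v), Finset.card_univ, Fintype.card_fin]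
    have := h2c.1
    omega

/-- In a graph with max degree ≤ 2, every positive level has at most 2 vertices. -/
lemma lvl_le_two {n : ℕ} {G : SimpleGraph (Fin n)} [DecidableRel G.Adj]
    (hdeg : ∀ w, G.degree w ≤ 2) (v : Fin n) :
    ∀ j, 1 ≤ j → lvl G v j ≤ 2 := by
  have key : ∀ j, 1 ≤ j → lvl G v (j+1) ≤ lvl G v j := by
    intro j hj
    unfold lvl
    set s := Finset.univ.filter (fun u => G.dist v u = j + 1) with hs
    set t := Finset.univ.filter (fun u => G.dist v u = j) with ht
    classical
    set f : Fin n → Fin n := fun u =>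
      if h : ∃ w, G.Adj w u ∧ G.dist v w = j then h.choose else v with hf
    apply Finset.card_le_card_of_injOn f
    · intro u hu
      rw [hs, Finset.mem_coe, Finset.mem_filter] at hu
      have hex : ∃ w, G.Adj w u ∧ G.dist v w = j := pred_exists hu.2
      rw [ht, Finset.mem_coe, Finset.mem_filter]
      refine ⟨Finset.mem_univ _, ?_⟩
      rw [hf]
      simp only [dif_pos hex]
      exact hex.choose_spec.2
    · intro u1 hu1 u2 hu2 hf12
      by_contra hne
      rw [hs, Finset.coe_filter] at hu1 hu2
      have hd1 : G.dist v u1 = j + 1 := hu1.2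
      have hd2 : G.dist v u2 = j + 1 := hu2.2
      have hex1 : ∃ w, G.Adj w u1 ∧ G.dist v w = j := pred_exists hd1
      have hex2 : ∃ w, G.Adj w u2 ∧ G.dist v w = j := pred_exists hd2
      have hfu1 : f u1 = hex1.choose := by rw [hf]; simp only [dif_pos hex1]
      have hfu2 : f u2 = hex2.choose := by rw [hf]; simp only [dif_pos hex2]
      set w := hex1.choose with hwdef
      have hw1 : G.Adj w u1 ∧ G.dist v w = j := hex1.choose_spec
      have hw2 : G.Adj hex2.choose u2 ∧ G.dist v hex2.choose = j := hex2.choose_spec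
      have hweq : hex2.choose = w := by rw [← hfu2, ← hf12, hfu1]
      rw [hweq] at hw2
      -- w has a neighbor at distance j - 1
      obtain ⟨j', hj'⟩ : ∃ j', j = j' + 1 := ⟨j - 1, by omega⟩
      obtain ⟨w', hw'a, hw'd⟩ := pred_exists (hj' ▸ hw1.2)
      have hne1 : w' ≠ u1 := by
        intro he; rw [he, hd1] at hw'd; omega
      have hne2 : w' ≠ u2 := by
        intro he; rw [he, hd2] at hw'd; omega
      have hsub : {u1, u2, w'} ⊆ G.neighborFinset w := by
        intro x hx
        simp only [Finset.mem_insert, Finset.mem_singleton] at hx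
        rcases hx with rfl | rfl | rfl
        · exact (SimpleGraph.mem_neighborFinset _ _ _).2 hw1.1
        · exact (SimpleGraph.mem_neighborFinset _ _ _).2 hw2.1
        · exact (SimpleGraph.mem_neighborFinset _ _ _).2 hw'a.symm
      have hcard3 : ({u1, u2, w'} : Finset (Fin n)).card = 3 := by
        rw [Finset.card_insert_of_notMem (by simp [hne, Ne.symm hne1, Ne.symm hne2]),
          Finset.card_insert_of_notMem (by simp [Ne.symm hne2])]
        · simp
      have := Finset.card_le_card hsub
      rw [hcard3, SimpleGraph.card_neighborFinset_eq_degree] at this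
      have := hdeg w
      omega
  -- base case j = 1
  have base : lvl G v 1 ≤ 2 := by
    rw [lvl_one]
    exact hdeg v
  intro j hj
  induction j with
  | zero => omega
  | succ m ih =>
    rcases Nat.eq_or_lt_of_le hj with h | h
    · rw [← h]; exact base
    · exact le_trans (key m (by omega)) (ih (by omega))

lemma cnt_upper {n : ℕ} {G : SimpleGraph (Fin n)} (h2c : TwoConnected G) {v : Fin n} {k : ℕ}
    (hk : 1 ≤ k) (hpos : 0 < cnt G v k) : cnt G v k + (2*k - 1) ≤ n := by
  obtain ⟨m, rfl⟩ : ∃ m, k = m + 1 := ⟨k - 1, by omega⟩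
  have hpart := part_lemma G v (m+1)
  obtain ⟨u, hu⟩ := Finset.card_pos.1 hpos
  rw [Finset.mem_filter] at hu
  have hsum : 2*m + 1 ≤ ∑ j ∈ Finset.range (m+1), lvl G v j := by
    rw [Finset.sum_range_succ']
    have h0 : 1 = lvl G v 0 := (lvl_zero h2c.2.1 v).symm
    have hrest : 2*m ≤ ∑ i ∈ Finset.range m, lvl G v (i+1) := by
      calc 2*m = ∑ _i ∈ Finset.range m, 2 := by simp [mul_comm]
      _ ≤ _ := by
        apply Finset.sum_le_sum
        intro i hi
        rw [Finset.mem_range] at hi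
        exact lvl_two_le h2c (u := u) (by omega) (by omega)
    omega
  omega

lemma cnt_lower {n : ℕ} {G : SimpleGraph (Fin n)} [DecidableRel G.Adj] (hconn : G.Connected)
    (hdeg : ∀ w, G.degree w ≤ 2) {v : Fin n} {k : ℕ} (hk : 1 ≤ k) :
    n ≤ cnt G v k + (2*k - 1) := by
  obtain ⟨m, rfl⟩ : ∃ m, k = m + 1 := ⟨k - 1, by omega⟩
  have hpart := part_lemma G v (m+1)
  have hsum : ∑ j ∈ Finset.range (m+1), lvl G v j ≤ 2*m + 1 := by
    rw [Finset.sum_range_succ']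
    have h0 : lvl G v 0 = 1 := lvl_zero hconn v
    have hrest : ∑ i ∈ Finset.range m, lvl G v (i+1) ≤ 2*m := by
      calc ∑ i ∈ Finset.range m, lvl G v (i+1) ≤ ∑ _i ∈ Finset.range m, 2 :=
        Finset.sum_le_sum (fun i _ => lvl_le_two hdeg v (i+1) (by omega))
      _ = 2*m := by simp [mul_comm]
    omega
  omega

lemma cycle_connected {n : ℕ} (hn : 3 ≤ n) : (cycleGraph n).Connected := by
  obtain ⟨m, rfl⟩ : ∃ m, n = m + 1 := ⟨n - 1, by omega⟩
  exact cycleGraph_connected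

lemma cycle_degree {n : ℕ} (hn : 3 ≤ n) (v : Fin n) : (cycleGraph n).degree v = 2 := by
  obtain ⟨m, rfl⟩ : ∃ m, n = m + 3 := ⟨n - 3, by omega⟩
  exact cycleGraph_degree_three_le

lemma cnt_compare {n : ℕ} {G : SimpleGraph (Fin n)} (h2c : TwoConnected G) {v : Fin n} {k : ℕ}
    (hk : 1 ≤ k) : cnt G v k ≤ cnt (cycleGraph n) v k := by
  rcases Nat.eq_zero_or_pos (cnt G v k) with h0 | hpos
  · omega
  · have h1 := cnt_upper h2c hk hpos
    have h2 := cnt_lower (cycle_connected h2c.1) (fun w => le_of_eq (cycle_degree h2c.1 w))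
      (v := v) hk
    omega

lemma tkk_compare {n : ℕ} {G : SimpleGraph (Fin n)} (h2c : TwoConnected G) {k : ℕ}
    (hk : 1 ≤ k) : tkk G k ≤ tkk (cycleGraph n) k :=
  Finset.sum_le_sum (fun v _ => cnt_compare h2c hk)

lemma w_nonneg {k : ℕ} (hk : 2 ≤ k) : (0:ℝ) ≤ 1/((k:ℝ)-1) - 1/k := by
  have h1 : (0:ℝ) < (k:ℝ) - 1 := by
    have : (2:ℝ) ≤ (k:ℝ) := by exact_mod_cast hk
    linarith
  have h2 : ((k:ℝ)-1) ≤ (k:ℝ) := by linarith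
  have := one_div_le_one_div_of_le h1 h2
  linarith

lemma Sord_le {n : ℕ} {G : SimpleGraph (Fin n)} (h2c : TwoConnected G) :
    Sord (cycleGraph n) ≤ Sord G := by
  rw [Sord_formula h2c.2.1, Sord_formula (cycle_connected h2c.1)]
  apply sub_le_sub_left
  apply Finset.sum_le_sum
  intro k hk
  have hk2 : 2 ≤ k := (Finset.mem_Icc.1 hk).1
  apply mul_le_mul_of_nonneg_left _ (w_nonneg hk2)
  exact_mod_cast tkk_compare h2c (by omega)

lemma tkk_two_eq_of_Sord_eq {n : ℕ} {G : SimpleGraph (Fin n)} (h2c : TwoConnected G)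
    (heq : Sord G = Sord (cycleGraph n)) : tkk G 2 = tkk (cycleGraph n) 2 := by
  have h1 := Sord_formula h2c.2.1 (G := G)
  have h2 := Sord_formula (cycle_connected h2c.1) (G := cycleGraph n)
  have hsums : ∑ k ∈ Finset.Icc 2 n, ((1:ℝ)/((k:ℝ)-1) - 1/k) * (tkk G k)
      = ∑ k ∈ Finset.Icc 2 n, ((1:ℝ)/((k:ℝ)-1) - 1/k) * (tkk (cycleGraph n) k) := by
    rw [h1, h2] at heq
    linarith
  have hzero : ∑ k ∈ Finset.Icc 2 n,
      ((1:ℝ)/((k:ℝ)-1) - 1/k) * ((tkk (cycleGraph n) k : ℝ) - tkk G k) = 0 := by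
    have : ∀ k ∈ Finset.Icc 2 n,
        ((1:ℝ)/((k:ℝ)-1) - 1/k) * ((tkk (cycleGraph n) k : ℝ) - tkk G k)
        = ((1:ℝ)/((k:ℝ)-1) - 1/k) * (tkk (cycleGraph n) k)
          - ((1:ℝ)/((k:ℝ)-1) - 1/k) * (tkk G k) := fun k _ => by ring
    rw [Finset.sum_congr rfl this, Finset.sum_sub_distrib, hsums]
    ring
  have hnn : ∀ k ∈ Finset.Icc 2 n, (0:ℝ) ≤
      ((1:ℝ)/((k:ℝ)-1) - 1/k) * ((tkk (cycleGraph n) k : ℝ) - tkk G k) := by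
    intro k hk
    have hk2 : 2 ≤ k := (Finset.mem_Icc.1 hk).1
    apply mul_nonneg (w_nonneg hk2)
    have := tkk_compare h2c (k := k) (by omega)
    have : (tkk G k : ℝ) ≤ tkk (cycleGraph n) k := by exact_mod_cast this
    linarith
  have h2mem : 2 ∈ Finset.Icc 2 n := Finset.mem_Icc.2 ⟨le_rfl, by have := h2c.1; omega⟩
  have := (Finset.sum_eq_zero_iff_of_nonneg hnn).1 hzero 2 h2mem
  have hw2 : ((1:ℝ)/((2:ℕ):ℝ)-1⁻¹ : ℝ) ≠ 0 := by norm_num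
  have hterm : ((1:ℝ)/(((2:ℕ):ℝ)-1) - 1/((2:ℕ):ℝ)) ≠ 0 := by norm_num
  have hfac : ((tkk (cycleGraph n) 2 : ℝ) - tkk G 2) = 0 := by
    rcases mul_eq_zero.1 this with h | h
    · exact absurd h hterm
    · exact h
  have : (tkk G 2 : ℝ) = tkk (cycleGraph n) 2 := by linarith
  exact_mod_cast this

lemma lvl_one_all_two {n : ℕ} {G : SimpleGraph (Fin n)} (h2c : TwoConnected G)
    (heqt : tkk G 2 = tkk (cycleGraph n) 2) : ∀ v, lvl G v 1 = 2 := by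
  classical
  have hsum : ∑ v, lvl G v 1 = ∑ v, lvl (cycleGraph n) v 1 := by
    have h1 : ∀ v : Fin n, lvl G v 1 + cnt G v 2 = n - 1 := by
      intro v
      rw [← cnt_one_split, cnt_one h2c.2.1]
    have h2 : ∀ v : Fin n, lvl (cycleGraph n) v 1 + cnt (cycleGraph n) v 2 = n - 1 := by
      intro v
      rw [← cnt_one_split, cnt_one (cycle_connected h2c.1)]
    have e1 : ∑ v, (lvl G v 1 + cnt G v 2) = ∑ v, (lvl (cycleGraph n) v 1
        + cnt (cycleGraph n) v 2) := by
      rw [Finset.sum_congr rfl (fun v _ => h1 v), Finset.sum_congr rfl (fun v _ => h2 v)]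
    rw [Finset.sum_add_distrib, Finset.sum_add_distrib] at e1
    have e2 : ∑ v, cnt G v 2 = ∑ v, cnt (cycleGraph n) v 2 := heqt
    omega
  have hcyc : ∀ v : Fin n, lvl (cycleGraph n) v 1 = 2 := by
    intro v
    rw [lvl_one]
    exact cycle_degree h2c.1 v
  rw [Finset.sum_congr rfl (fun v _ => hcyc v), Finset.sum_const, Finset.card_univ,
    Fintype.card_fin, smul_eq_mul] at hsum
  -- each lvl ≥ 2 and sum = 2n forces equality
  intro v
  by_contra hne
  have hge := lvl_one_ge_two h2c v
  have h3 : 3 ≤ lvl G v 1 := by omega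
  have hrest : 2 * (n - 1) ≤ ∑ u ∈ Finset.univ.erase v, lvl G u 1 := by
    calc 2 * (n-1) = ∑ _u ∈ Finset.univ.erase v, 2 := by
          rw [Finset.sum_const, Finset.card_erase_of_mem (Finset.mem_univ v),
            Finset.card_univ, Fintype.card_fin, smul_eq_mul, mul_comm]
    _ ≤ _ := Finset.sum_le_sum (fun u _ => lvl_one_ge_two h2c u)
  have hsplit : ∑ u, lvl G u 1 = lvl G v 1 + ∑ u ∈ Finset.univ.erase v, lvl G u 1 :=
    (Finset.add_sum_erase _ _ (Finset.mem_univ v)).symm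
  have hn := h2c.1
  omega

section Construction
variable {n : ℕ} {G : SimpleGraph (Fin n)} [DecidableRel G.Adj]

/-- if a vertex of degree two has two distinct neighbors, its neighborhood is that pair -/
lemma pair_nb (hdeg : ∀ v, G.degree v = 2) {x y z : Fin n} (h1 : G.Adj x y) (h2 : G.Adj x z)
    (hne : y ≠ z) : G.neighborFinset x = {y, z} := by
  have hsub : {y, z} ⊆ G.neighborFinset x := by
    intro w hw
    simp only [Finset.mem_insert, Finset.mem_singleton] at hw
    rcases hw with rfl | rfl
    · exact (SimpleGraph.mem_neighborFinset _ _ _).2 h1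
    · exact (SimpleGraph.mem_neighborFinset _ _ _).2 h2
  refine (Finset.eq_of_subset_of_card_le hsub ?_).symm
  rw [SimpleGraph.card_neighborFinset_eq_degree, hdeg, Finset.card_insert_of_notMem
    (by simp [hne]), Finset.card_singleton]

noncomputable def nxtv (G : SimpleGraph (Fin n)) [DecidableRel G.Adj] (a b : Fin n) : Fin n :=
  if h : ∃ c, (G.neighborFinset b).erase a = {c} then h.choose else a

lemma erase_eq_singleton (hdeg : ∀ v, G.degree v = 2) {a b : Fin n} (hab : G.Adj a b) :
    ∃ c, (G.neighborFinset b).erase a = {c} := by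
  apply Finset.card_eq_one.1
  rw [Finset.card_erase_of_mem ((SimpleGraph.mem_neighborFinset _ _ _).2 hab.symm),
    SimpleGraph.card_neighborFinset_eq_degree, hdeg]

lemma nxtv_eq {a b c : Fin n} (hc : (G.neighborFinset b).erase a = {c}) :
    nxtv G a b = c := by
  have hex : ∃ d, (G.neighborFinset b).erase a = {d} := ⟨c, hc⟩
  rw [nxtv, dif_pos hex]
  have h2 := hex.choose_spec
  have h3 : ({c} : Finset (Fin n)) = {hex.choose} := hc.symm.trans h2
  exact (Finset.singleton_injective h3).symm

lemma nxtv_mem (hdeg : ∀ v, G.degree v = 2) {a b : Fin n} (hab : G.Adj a b) :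
    G.Adj b (nxtv G a b) ∧ nxtv G a b ≠ a := by
  obtain ⟨c, hc⟩ := erase_eq_singleton hdeg hab
  rw [nxtv_eq hc]
  have : c ∈ (G.neighborFinset b).erase a := by
    rw [hc]; exact Finset.mem_singleton_self _
  rw [Finset.mem_erase, SimpleGraph.mem_neighborFinset] at this
  exact ⟨this.2, this.1⟩

lemma nxtv_uniq (hdeg : ∀ v, G.degree v = 2) {a b c : Fin n} (hab : G.Adj a b)
    (h1 : G.Adj b c) (h2 : c ≠ a) : c = nxtv G a b := by
  obtain ⟨d, hd⟩ := erase_eq_singleton hdeg hab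
  rw [nxtv_eq hd]
  have hcm : c ∈ (G.neighborFinset b).erase a := by
    rw [Finset.mem_erase, SimpleGraph.mem_neighborFinset]
    exact ⟨h2, h1⟩
  rw [hd, Finset.mem_singleton] at hcm
  exact hcm

lemma mod_helper {m x : ℕ} (hm : 0 < m) (hx : x < 2*m) :
    x % m = if x < m then x else x - m := by
  split
  · exact Nat.mod_eq_of_lt ‹_›
  · rw [Nat.mod_eq_sub_mod (by omega)]
    exact Nat.mod_eq_of_lt (by omega)

lemma iso_of_two_regular (hn : 3 ≤ n) (hconn : G.Connected)
    (hdeg : ∀ v, G.degree v = 2) : Nonempty (G ≃g cycleGraph n) := by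
  classical
  -- starting edge
  have hnpos : 0 < n := by omega
  set v0 : Fin n := ⟨0, hnpos⟩ with hv0
  obtain ⟨v1, hadj01⟩ := (G.degree_pos_iff_exists_adj v0).1 (by rw [hdeg v0]; omega)
  -- the walking sequence
  set step : Fin n × Fin n → Fin n × Fin n := fun p => (p.2, nxtv G p.1 p.2) with hstepdef
  set f : ℕ → Fin n := fun k => (step^[k] (v0, v1)).1 with hfdef
  have hf0 : f 0 = v0 := rfl
  have hsnd : ∀ k, (step^[k] (v0,v1)).2 = f (k+1) := by
    intro k
    show _ = (step^[k+1] (v0,v1)).1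
    rw [Function.iterate_succ_apply']
  have hf1 : f 1 = v1 := by
    rw [← hsnd 0]
    rfl
  have hstep2 : ∀ k, f (k+2) = nxtv G (f k) (f (k+1)) := by
    intro k
    rw [← hsnd (k+1), Function.iterate_succ_apply']
    show nxtv G (step^[k] (v0,v1)).1 (step^[k] (v0,v1)).2 = _
    rw [hsnd k]
  have hadjf : ∀ k, G.Adj (f k) (f (k+1)) := by
    intro k
    induction k with
    | zero => rw [hf0, hf1]; exact hadj01
    | succ j ih =>
      rw [hstep2 j]
      exact (nxtv_mem hdeg ih).1
  have hne2 : ∀ k, f (k+2) ≠ f k := by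
    intro k
    rw [hstep2 k]
    exact (nxtv_mem hdeg (hadjf k)).2
  have huniqf : ∀ k c, G.Adj (f (k+1)) c → c ≠ f k → c = f (k+2) := by
    intro k c h1 h2
    rw [hstep2 k]
    exact nxtv_uniq hdeg (hadjf k) h1 h2
  -- pigeonhole: some repeat within the first n+1 values
  have hrepex : ∃ k, 0 < k ∧ k ≤ n ∧ ∃ j, j < k ∧ f k = f j := by
    obtain ⟨i, hi, j, hj, hij, hfij⟩ := Finset.exists_ne_map_eq_of_card_lt_of_maps_to
      (s := Finset.range (n+1)) (t := (Finset.univ : Finset (Fin n)))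
      (by rw [Finset.card_range, Finset.card_univ, Fintype.card_fin]; omega)
      (fun x _ => Finset.mem_univ (f x))
    rw [Finset.mem_range] at hi hj
    rcases Nat.lt_or_ge i j with h | h
    · exact ⟨j, by omega, by omega, i, h, hfij.symm⟩
    · exact ⟨i, by omega, by omega, j, by omega, hfij⟩
  have hPex : ∃ k, 0 < k ∧ ∃ j, j < k ∧ f k = f j := by
    obtain ⟨k, h1, _, h3⟩ := hrepex
    exact ⟨k, h1, h3⟩
  set m := Nat.find hPex with hmdef
  have hspec : 0 < m ∧ ∃ j, j < m ∧ f m = f j := Nat.find_spec hPex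
  have hminm : ∀ k, k < m → ¬ (0 < k ∧ ∃ j, j < k ∧ f k = f j) :=
    fun k hk => Nat.find_min hPex hk
  have hmn : m ≤ n := by
    obtain ⟨k, h1, h2, h3⟩ := hrepex
    exact le_trans (Nat.find_min' hPex ⟨h1, h3⟩) h2
  clear_value m
  obtain ⟨hmpos, j, hjm, hfmj⟩ := hspec
  have hinj : ∀ a b, a < b → b < m → f a ≠ f b := by
    intro a b hab hbm heq
    exact hminm b hbm ⟨by omega, a, hab, heq.symm⟩
  -- the repeat must close the cycle: j = 0
  have hj0 : j = 0 := by
    by_contra hj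
    have hj1 : 1 ≤ j := by omega
    have hadjprev : G.Adj (f (m-1)) (f j) := by
      have := hadjf (m-1)
      rw [show m - 1 + 1 = m by omega, hfmj] at this
      exact this
    have hadjm1 : G.Adj (f j) (f (j-1)) := by
      have := hadjf (j-1)
      rw [show j - 1 + 1 = j by omega] at this
      exact this.symm
    have hnbj : G.neighborFinset (f j) = {f (j-1), f (j+1)} := by
      apply pair_nb hdeg hadjm1 (hadjf j)
      intro he
      have := hne2 (j-1)
      rw [show j - 1 + 2 = j + 1 by omega] at this
      exact this he.symm
    have hmem : f (m-1) ∈ G.neighborFinset (f j) :=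
      (SimpleGraph.mem_neighborFinset _ _ _).2 hadjprev.symm
    rw [hnbj, Finset.mem_insert, Finset.mem_singleton] at hmem
    rcases hmem with hc | hc
    · exact hinj (j-1) (m-1) (by omega) (by omega) hc.symm
    · rcases Nat.lt_or_ge (j+1) m with hlt | hge
      · rcases Nat.lt_trichotomy (j+1) (m-1) with h | h | h
        · exact hinj (j+1) (m-1) h (by omega) hc.symm
        · have := hne2 j
          rw [show j + 2 = m by omega, hfmj] at this
          exact this rfl
        · omega
      · -- j + 1 = m
        have hjm1 : j = m - 1 := by omega
        have : G.Adj (f j) (f j) := by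
          have h' := hadjprev
          rw [← hjm1] at h'
          exact h'.symm
        exact G.loopless.irrefl _ this
  rw [hj0] at hfmj
  -- m ≥ 3
  have hm3 : 3 ≤ m := by
    rcases Nat.lt_or_ge m 3 with h | h
    · exfalso
      have h1 : f 1 ≠ f 0 := (G.ne_of_adj (hadjf 0)).symm
      have h2 : f 2 ≠ f 0 := hne2 0
      interval_cases m
      · exact h1 hfmj
      · exact h2 hfmj
    · exact h
  -- wraparound
  have hwrap : ∀ k, k ≤ m → f (k % m) = f k := by
    intro k hk
    rcases Nat.lt_or_ge k m with h | h
    · rw [Nat.mod_eq_of_lt h]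
    · have hkm : k = m := by omega
      rw [hkm, Nat.mod_self, hfmj]
  have hps : ∀ a, a < m → ((a + (m-1)) % m + 1) % m = a := by
    intro a ha
    rcases Nat.eq_zero_or_pos a with rfl | hapos
    · rw [Nat.zero_add, Nat.mod_eq_of_lt (show m - 1 < m by omega),
        show m - 1 + 1 = m by omega, Nat.mod_self]
    · rw [show a + (m-1) = (a-1) + m by omega, Nat.add_mod_right,
        Nat.mod_eq_of_lt (show a - 1 < m by omega), show a - 1 + 1 = a by omega,
        Nat.mod_eq_of_lt ha]
  have hnbh : ∀ a, a < m →
      G.neighborFinset (f a) = {f ((a + (m-1)) % m), f ((a+1) % m)} := by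
    intro a ha
    have hadjnext : G.Adj (f a) (f ((a+1) % m)) := by
      rw [hwrap (a+1) (by omega)]
      exact hadjf a
    set p := (a + (m-1)) % m with hpdef
    have hpm : p < m := Nat.mod_lt _ (by omega)
    have hadjprev : G.Adj (f a) (f p) := by
      have h := hadjf p
      rw [← hwrap (p+1) (by omega)] at h
      rw [hpdef] at h
      rw [hps a ha] at h
      rw [← hpdef] at h
      exact h.symm
    apply pair_nb hdeg hadjprev hadjnext
    -- p ≠ (a+1) % m as indices below m, then injectivity
    intro he
    have hint : p ≠ (a+1) % m := by
      rw [hpdef, mod_helper (by omega) (by omega), mod_helper (by omega) (by omega)]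
      split <;> split <;> omega
    have h2 : (a+1) % m < m := Nat.mod_lt _ (by omega)
    rcases Nat.lt_trichotomy p ((a+1) % m) with h | h | h
    · exact hinj p ((a+1)%m) h h2 he
    · exact hint h
    · exact hinj ((a+1)%m) p h hpm he.symm
  -- closure under adjacency forces m = n
  have hclosed : ∀ x ∈ (Finset.range m).image f, ∀ y, G.Adj x y →
      y ∈ (Finset.range m).image f := by
    intro x hx y hxy
    obtain ⟨a, ha, rfl⟩ := Finset.mem_image.1 hx
    rw [Finset.mem_range] at ha
    have : y ∈ G.neighborFinset (f a) := (SimpleGraph.mem_neighborFinset _ _ _).2 hxy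
    rw [hnbh a ha, Finset.mem_insert, Finset.mem_singleton] at this
    rcases this with rfl | rfl
    · exact Finset.mem_image.2 ⟨_, Finset.mem_range.2 (Nat.mod_lt _ (by omega)), rfl⟩
    · exact Finset.mem_image.2 ⟨_, Finset.mem_range.2 (Nat.mod_lt _ (by omega)), rfl⟩
  have hwalkcl : ∀ (x y : Fin n) (p : G.Walk x y), x ∈ (Finset.range m).image f →
      y ∈ (Finset.range m).image f := by
    intro x y p
    induction p with
    | nil => exact id
    | cons h q ih => intro hx; exact ih (hclosed _ hx _ h)
  have huniv : (Finset.univ : Finset (Fin n)) ⊆ (Finset.range m).image f := by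
    intro u _
    obtain ⟨p⟩ := hconn.preconnected v0 u
    exact hwalkcl v0 u p (Finset.mem_image.2 ⟨0, Finset.mem_range.2 (by omega), hf0⟩)
  have hmn' : n ≤ m := by
    calc n = (Finset.univ : Finset (Fin n)).card := by
          rw [Finset.card_univ, Fintype.card_fin]
    _ ≤ ((Finset.range m).image f).card := Finset.card_le_card huniv
    _ ≤ m := le_trans Finset.card_image_le (by rw [Finset.card_range])
  have hmeq : m = n := by omega
  -- build the isomorphism
  subst hmeq
  have hfinj : Function.Injective (fun i : Fin m => f i.val) := by
    intro a b hab
    by_contra hne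
    rcases Nat.lt_trichotomy a.val b.val with h | h | h
    · exact hinj a.val b.val h b.isLt hab
    · exact hne (Fin.ext h)
    · exact hinj b.val a.val h a.isLt hab.symm
  set e : Fin m ≃ Fin m := Equiv.ofBijective _ (Finite.injective_iff_bijective.1 hfinj)
    with hedef
  have heval : ∀ i : Fin m, e i = f i.val := fun i => rfl
  -- characterize adjacency through f
  have hsubval : ∀ i j : Fin m, (j - i).val = (m - i.val + j.val) % m := by
    intro i j
    rw [Fin.sub_def]
  have hchar : ∀ i j : Fin m, ((j - i).val = 1 ↔ j.val = (i.val + 1) % m) := by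
    intro i j
    rw [hsubval]
    have hi := i.isLt
    have hj := j.isLt
    rw [mod_helper (by omega) (by omega), mod_helper (by omega) (by omega)]
    split <;> split <;> omega
  have hadje : ∀ i j : Fin m, G.Adj (f i.val) (f j.val) ↔
      (j.val = (i.val + 1) % m ∨ i.val = (j.val + 1) % m) := by
    intro i j
    constructor
    · intro hadj
      have : f j.val ∈ G.neighborFinset (f i.val) :=
        (SimpleGraph.mem_neighborFinset _ _ _).2 hadj
      rw [hnbh i.val i.isLt, Finset.mem_insert, Finset.mem_singleton] at this
      have hfinj' : ∀ a b : ℕ, a < m → b < m → f a = f b → a = b := by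
        intro a b ha hb hab
        have h := hfinj (show (fun i : Fin m => f i.val) ⟨a, ha⟩
          = (fun i : Fin m => f i.val) ⟨b, hb⟩ from hab)
        simpa using h
      rcases this with hc | hc
      · right
        have := hfinj' j.val ((i.val + (m-1)) % m) j.isLt (Nat.mod_lt _ (by omega)) hc
        rw [← hps i.val i.isLt, this]
      · left
        exact hfinj' j.val ((i.val + 1) % m) j.isLt (Nat.mod_lt _ (by omega)) hc
    · intro hc
      rcases hc with hc | hc
      · have : G.Adj (f i.val) (f ((i.val + 1) % m)) := by
          rw [hwrap (i.val+1) (by omega)]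
          exact hadjf i.val
        rwa [← hc] at this
      · have : G.Adj (f j.val) (f ((j.val + 1) % m)) := by
          rw [hwrap (j.val+1) (by omega)]
          exact hadjf j.val
        rw [← hc] at this
        exact this.symm
  have hcycadj : ∀ i j : Fin m, (cycleGraph m).Adj i j ↔
      ((i - j).val = 1 ∨ (j - i).val = 1) := fun i j => cycleGraph_adj'
  refine ⟨(SimpleGraph.Iso.symm ⟨e, ?_⟩ : G ≃g cycleGraph m)⟩
  intro a b
  show G.Adj (f a.val) (f b.val) ↔ (cycleGraph m).Adj a b
  rw [hadje, hcycadj, hchar b a, hchar a b]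
  tauto

end Construction

lemma harary_iso {n : ℕ} {G H : SimpleGraph (Fin n)} (e : G ≃g H) :
    hararyIndex G = hararyIndex H := by
  rw [harary_eq_half, harary_eq_half]
  congr 1
  unfold Sord
  calc ∑ u : Fin n, ∑ v : Fin n, (1:ℝ)/(G.dist u v)
      = ∑ u : Fin n, ∑ v : Fin n, (1:ℝ)/(H.dist (e u) (e v)) := by
        apply Finset.sum_congr rfl
        intro u _
        apply Finset.sum_congr rfl
        intro v _
        rw [iso_dist e]
    _ = ∑ u : Fin n, ∑ v : Fin n, (1:ℝ)/(H.dist u v) := by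
        rw [← Equiv.sum_comp e.toEquiv (fun u => ∑ v : Fin n, (1:ℝ)/(H.dist u v))]
        apply Finset.sum_congr rfl
        intro u _
        rw [← Equiv.sum_comp e.toEquiv (fun v => (1:ℝ)/(H.dist (e.toEquiv u) v))]
        rfl


/-- For every 2-connected graph `G` on `n` vertices, `H(G) ≥ H(C_n)`,
with equality iff `G ≅ C_n`. -/
theorem harary_ge_of_twoConnected {n : ℕ} (G : SimpleGraph (Fin n))
    (h : TwoConnected G) :
    hararyIndex (cycleGraph n) ≤ hararyIndex G ∧
      (hararyIndex G = hararyIndex (cycleGraph n) ↔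
        Nonempty (G ≃g cycleGraph n)) := by
  classical
  have hn := h.1
  refine ⟨?_, ?_, ?_⟩
  · rw [harary_eq_half, harary_eq_half]
    have := Sord_le h
    linarith
  · intro heq
    have hs : Sord G = Sord (cycleGraph n) := by
      rw [harary_eq_half, harary_eq_half] at heq
      linarith
    have ht2 := tkk_two_eq_of_Sord_eq h hs
    have hlvl := lvl_one_all_two h ht2
    haveI : DecidableRel G.Adj := Classical.decRel _
    have hdeg : ∀ v, G.degree v = 2 := fun v => by rw [← lvl_one]; exact hlvl v
    exact iso_of_two_regular hn h.2.1 hdeg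
  · rintro ⟨e⟩
    exact harary_iso e
end
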